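/- If a sequent Π → C of size n, in which ! is applied only to variables, is derivable in !L*, then it has a cut-free derivation of total size less than 12n² + 3n. -/

import Mathlib

/-- Formulae (types) of the Lambek calculus with a modality:
`var` = primitive type, `div B A` = B / A, `ldiv A B` = A \ B, `bang A` = !A. -/
inductive Fm : Type
  | var : ℕ → Fm
  | div : Fm → Fm → Fm
  | ldiv : Fm → Fm → Fm
  | bang : Fm → Fm
  deriving DecidableEq

open Fm

/-- The size of a formula: the total number of variable and connective occurrences. -/
def Fm.size : Fm → ℕ
  | var _ => 1
  | div a b => a.size + b.size + 1
  | ldiv a b => a.size + b.size + 1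
  | bang a => a.size + 1

/-- The size of a sequent Φ → C. -/
def seqSize (Φ : List Fm) (C : Fm) : ℕ := (Φ.map Fm.size).sum + C.size

/-- `!` is applied only to variables (primitive types) in the formula. -/
def bangVar : Fm → Prop
  | var _ => True
  | div a b => bangVar a ∧ bangVar b
  | ldiv a b => bangVar a ∧ bangVar b
  | bang a => ∃ n : ℕ, a = var n

/-- Cut-free derivation trees in !L*. -/
inductive BangD : List Fm → Fm → Type
  | ax (A : Fm) : BangD [A] A
  | divL (Γ Δ₁ Δ₂ : List Fm) (A B C : Fm) :
      BangD Γ A → BangD (Δ₁ ++ B :: Δ₂) C →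
      BangD (Δ₁ ++ div B A :: (Γ ++ Δ₂)) C
  | divR (Γ : List Fm) (A B : Fm) :
      BangD (Γ ++ [A]) B → BangD Γ (div B A)
  | ldivL (Γ Δ₁ Δ₂ : List Fm) (A B C : Fm) :
      BangD Γ A → BangD (Δ₁ ++ B :: Δ₂) C →
      BangD (Δ₁ ++ Γ ++ ldiv A B :: Δ₂) C
  | ldivR (Γ : List Fm) (A B : Fm) :
      BangD (A :: Γ) B → BangD Γ (ldiv A B)
  | bangL (Γ₁ Γ₂ : List Fm) (A C : Fm) :
      BangD (Γ₁ ++ A :: Γ₂) C → BangD (Γ₁ ++ bang A :: Γ₂) C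
  | bangR (Γ : List Fm) (B : Fm) :
      BangD (Γ.map bang) B → BangD (Γ.map bang) (bang B)
  | perm1 (Δ₁ Γ Δ₂ : List Fm) (A C : Fm) :
      BangD (Δ₁ ++ bang A :: (Γ ++ Δ₂)) C → BangD (Δ₁ ++ Γ ++ bang A :: Δ₂) C
  | perm2 (Δ₁ Γ Δ₂ : List Fm) (A C : Fm) :
      BangD (Δ₁ ++ Γ ++ bang A :: Δ₂) C → BangD (Δ₁ ++ bang A :: (Γ ++ Δ₂)) C
  | contr (Δ₁ Δ₂ : List Fm) (A C : Fm) :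
      BangD (Δ₁ ++ bang A :: bang A :: Δ₂) C → BangD (Δ₁ ++ bang A :: Δ₂) C

/-- Number of applications of logical rules (all rules except permutation and contraction). -/
def BangD.logicalCount : ∀ {Φ : List Fm} {C : Fm}, BangD Φ C → ℕ
  | _, _, BangD.ax _ => 0
  | _, _, BangD.divL _ _ _ _ _ _ d e => d.logicalCount + e.logicalCount + 1
  | _, _, BangD.divR _ _ _ d => d.logicalCount + 1
  | _, _, BangD.ldivL _ _ _ _ _ _ d e => d.logicalCount + e.logicalCount + 1
  | _, _, BangD.ldivR _ _ _ d => d.logicalCount + 1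
  | _, _, BangD.bangL _ _ _ _ d => d.logicalCount + 1
  | _, _, BangD.bangR _ _ d => d.logicalCount + 1
  | _, _, BangD.perm1 _ _ _ _ _ d => d.logicalCount
  | _, _, BangD.perm2 _ _ _ _ _ d => d.logicalCount
  | _, _, BangD.contr _ _ _ _ d => d.logicalCount

/-- Number of applications of the contraction rule. -/
def BangD.contrCount : ∀ {Φ : List Fm} {C : Fm}, BangD Φ C → ℕ
  | _, _, BangD.ax _ => 0
  | _, _, BangD.divL _ _ _ _ _ _ d e => d.contrCount + e.contrCount
  | _, _, BangD.divR _ _ _ d => d.contrCount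
  | _, _, BangD.ldivL _ _ _ _ _ _ d e => d.contrCount + e.contrCount
  | _, _, BangD.ldivR _ _ _ d => d.contrCount
  | _, _, BangD.bangL _ _ _ _ d => d.contrCount
  | _, _, BangD.bangR _ _ d => d.contrCount
  | _, _, BangD.perm1 _ _ _ _ _ d => d.contrCount
  | _, _, BangD.perm2 _ _ _ _ _ d => d.contrCount
  | _, _, BangD.contr _ _ _ _ d => d.contrCount + 1

/-- The total size of a derivation: the number of axiom instances and rule
applications (i.e. of sequent occurrences) in it. -/
def BangD.dsize : ∀ {Φ : List Fm} {C : Fm}, BangD Φ C → ℕ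
  | _, _, BangD.ax _ => 1
  | _, _, BangD.divL _ _ _ _ _ _ d e => d.dsize + e.dsize + 1
  | _, _, BangD.divR _ _ _ d => d.dsize + 1
  | _, _, BangD.ldivL _ _ _ _ _ _ d e => d.dsize + e.dsize + 1
  | _, _, BangD.ldivR _ _ _ d => d.dsize + 1
  | _, _, BangD.bangL _ _ _ _ d => d.dsize + 1
  | _, _, BangD.bangR _ _ d => d.dsize + 1
  | _, _, BangD.perm1 _ _ _ _ _ d => d.dsize + 1
  | _, _, BangD.perm2 _ _ _ _ _ d => d.dsize + 1
  | _, _, BangD.contr _ _ _ _ d => d.dsize + 1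


-- auxiliary development, to be pasted above the theorem
section Aux

open Fm

/-- Is the formula a `bang`? -/
def isBang : Fm → Bool
  | Fm.bang _ => true
  | _ => false

@[simp] lemma isBang_var (n : ℕ) : isBang (var n) = false := rfl
@[simp] lemma isBang_div (a b : Fm) : isBang (div a b) = false := rfl
@[simp] lemma isBang_ldiv (a b : Fm) : isBang (ldiv a b) = false := rfl
@[simp] lemma isBang_bang (a : Fm) : isBang (bang a) = true := rfl

/-- Keep non-bang formulae. -/
def keep (F : Fm) : Bool := !isBang F

@[simp] lemma keep_var (n : ℕ) : keep (var n) = true := rfl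
@[simp] lemma keep_div (a b : Fm) : keep (div a b) = true := rfl
@[simp] lemma keep_ldiv (a b : Fm) : keep (ldiv a b) = true := rfl
@[simp] lemma keep_bang (a : Fm) : keep (bang a) = false := rfl

/-- `Φ` can be turned into `Ψ` by the permutation rules: same multiset,
same subsequence of non-bang formulae. -/
def canPerm (Φ Ψ : List Fm) : Prop :=
  Φ.Perm Ψ ∧ Φ.filter keep = Ψ.filter keep

lemma canPerm_refl (Φ : List Fm) : canPerm Φ Φ := ⟨List.Perm.refl _, rfl⟩

lemma canPerm_trans {Φ Ψ Θ : List Fm} (h₁ : canPerm Φ Ψ) (h₂ : canPerm Ψ Θ) :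
    canPerm Φ Θ := ⟨h₁.1.trans h₂.1, h₁.2.trans h₂.2⟩

lemma canPerm_symm {Φ Ψ : List Fm} (h : canPerm Φ Ψ) : canPerm Ψ Φ :=
  ⟨h.1.symm, h.2.symm⟩

lemma canPerm_move (Δ₁ Γ Δ₂ : List Fm) (A : Fm) :
    canPerm (Δ₁ ++ Γ ++ bang A :: Δ₂) (Δ₁ ++ bang A :: (Γ ++ Δ₂)) := by
  constructor
  · rw [List.append_assoc]
    exact List.Perm.append_left Δ₁ List.perm_middle
  · simp [List.filter_append]

/-- Transport a derivation along an equality of antecedents. -/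
def castD {Φ Ψ : List Fm} {C : Fm} (h : Φ = Ψ) (d : BangD Φ C) : BangD Ψ C :=
  h ▸ d

@[simp] lemma castD_dsize {Φ Ψ : List Fm} {C : Fm} (h : Φ = Ψ) (d : BangD Φ C) :
    (castD h d).dsize = d.dsize := by subst h; rfl

/-- Number of right-rule (`divR`, `ldivR`) applications. -/
def BangD.nR : ∀ {Φ : List Fm} {C : Fm}, BangD Φ C → ℕ
  | _, _, BangD.ax _ => 0
  | _, _, BangD.divL _ _ _ _ _ _ d e => d.nR + e.nR
  | _, _, BangD.divR _ _ _ d => d.nR + 1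
  | _, _, BangD.ldivL _ _ _ _ _ _ d e => d.nR + e.nR
  | _, _, BangD.ldivR _ _ _ d => d.nR + 1
  | _, _, BangD.bangL _ _ _ _ d => d.nR
  | _, _, BangD.bangR _ _ d => d.nR
  | _, _, BangD.perm1 _ _ _ _ _ d => d.nR
  | _, _, BangD.perm2 _ _ _ _ _ d => d.nR
  | _, _, BangD.contr _ _ _ _ d => d.nR

/-- Number of binary (`divL`, `ldivL`) applications. -/
def BangD.nB : ∀ {Φ : List Fm} {C : Fm}, BangD Φ C → ℕ
  | _, _, BangD.ax _ => 0
  | _, _, BangD.divL _ _ _ _ _ _ d e => d.nB + e.nB + 1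
  | _, _, BangD.divR _ _ _ d => d.nB
  | _, _, BangD.ldivL _ _ _ _ _ _ d e => d.nB + e.nB + 1
  | _, _, BangD.ldivR _ _ _ d => d.nB
  | _, _, BangD.bangL _ _ _ _ d => d.nB
  | _, _, BangD.bangR _ _ d => d.nB
  | _, _, BangD.perm1 _ _ _ _ _ d => d.nB
  | _, _, BangD.perm2 _ _ _ _ _ d => d.nB
  | _, _, BangD.contr _ _ _ _ d => d.nB

/-- Number of division connectives in a formula. -/
def Fm.ndiv : Fm → ℕ
  | var _ => 0
  | div a b => a.ndiv + b.ndiv + 1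
  | ldiv a b => a.ndiv + b.ndiv + 1
  | bang a => a.ndiv

/-- Number of bangs in a formula. -/
def Fm.nbang : Fm → ℕ
  | var _ => 0
  | div a b => a.nbang + b.nbang
  | ldiv a b => a.nbang + b.nbang
  | bang a => a.nbang + 1

def sdiv (Φ : List Fm) (C : Fm) : ℕ := (Φ.map Fm.ndiv).sum + C.ndiv
def sbang (Φ : List Fm) (C : Fm) : ℕ := (Φ.map Fm.nbang).sum + C.nbang

end Aux

section Counts

open Fm

/-- All formulae of the sequent have `!` applied only to variables. -/
def good (Φ : List Fm) (C : Fm) : Prop := ∀ F ∈ C :: Φ, bangVar F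

lemma good_divL₁ {Γ Δ₁ Δ₂ : List Fm} {A B C₀ : Fm}
    (h : good (Δ₁ ++ div B A :: (Γ ++ Δ₂)) C₀) : good Γ A := by
  simp only [good, List.forall_mem_cons, List.forall_mem_append, bangVar] at h ⊢
  tauto

lemma good_divL₂ {Γ Δ₁ Δ₂ : List Fm} {A B C₀ : Fm}
    (h : good (Δ₁ ++ div B A :: (Γ ++ Δ₂)) C₀) : good (Δ₁ ++ B :: Δ₂) C₀ := by
  simp only [good, List.forall_mem_cons, List.forall_mem_append, bangVar] at h ⊢
  tauto

lemma good_divR {Γ : List Fm} {A B : Fm}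
    (h : good Γ (div B A)) : good (Γ ++ [A]) B := by
  simp only [good, List.forall_mem_cons, List.forall_mem_append,
    List.forall_mem_singleton, bangVar] at h ⊢
  tauto

lemma good_ldivL₁ {Γ Δ₁ Δ₂ : List Fm} {A B C₀ : Fm}
    (h : good (Δ₁ ++ Γ ++ ldiv A B :: Δ₂) C₀) : good Γ A := by
  simp only [good, List.forall_mem_cons, List.forall_mem_append, bangVar] at h ⊢
  tauto

lemma good_ldivL₂ {Γ Δ₁ Δ₂ : List Fm} {A B C₀ : Fm}
    (h : good (Δ₁ ++ Γ ++ ldiv A B :: Δ₂) C₀) : good (Δ₁ ++ B :: Δ₂) C₀ := by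
  simp only [good, List.forall_mem_cons, List.forall_mem_append, bangVar] at h ⊢
  tauto

lemma good_ldivR {Γ : List Fm} {A B : Fm}
    (h : good Γ (ldiv A B)) : good (A :: Γ) B := by
  simp only [good, List.forall_mem_cons, bangVar] at h ⊢
  tauto

lemma good_bangL {Γ₁ Γ₂ : List Fm} {A C₀ : Fm}
    (h : good (Γ₁ ++ bang A :: Γ₂) C₀) : good (Γ₁ ++ A :: Γ₂) C₀ := by
  have hA : bangVar (bang A) := h _ (by simp)
  obtain ⟨n, rfl⟩ := hA
  simp only [good, List.forall_mem_cons, List.forall_mem_append, bangVar] at h ⊢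
  tauto

lemma good_bangR {Γ : List Fm} {B : Fm}
    (h : good (Γ.map bang) (bang B)) : good (Γ.map bang) B := by
  have hB : bangVar (bang B) := h _ (by simp)
  obtain ⟨n, rfl⟩ := hB
  simp only [good, List.forall_mem_cons, bangVar] at h ⊢
  tauto

lemma good_perm1 {Δ₁ Γ Δ₂ : List Fm} {A C₀ : Fm}
    (h : good (Δ₁ ++ Γ ++ bang A :: Δ₂) C₀) :
    good (Δ₁ ++ bang A :: (Γ ++ Δ₂)) C₀ := by
  simp only [good, List.forall_mem_cons, List.forall_mem_append, bangVar] at h ⊢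
  tauto

lemma good_perm2 {Δ₁ Γ Δ₂ : List Fm} {A C₀ : Fm}
    (h : good (Δ₁ ++ bang A :: (Γ ++ Δ₂)) C₀) :
    good (Δ₁ ++ Γ ++ bang A :: Δ₂) C₀ := by
  simp only [good, List.forall_mem_cons, List.forall_mem_append, bangVar] at h ⊢
  tauto

lemma good_contr {Δ₁ Δ₂ : List Fm} {A C₀ : Fm}
    (h : good (Δ₁ ++ bang A :: Δ₂) C₀) :
    good (Δ₁ ++ bang A :: bang A :: Δ₂) C₀ := by
  simp only [good, List.forall_mem_cons, List.forall_mem_append, bangVar] at h ⊢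
  tauto

lemma good_contr_var {Δ₁ Δ₂ : List Fm} {A C₀ : Fm}
    (h : good (Δ₁ ++ bang A :: Δ₂) C₀) : ∃ n, A = var n := by
  simpa [bangVar] using h (bang A) (by simp)

lemma count1 : ∀ {Φ : List Fm} {C : Fm} (d : BangD Φ C), good Φ C →
    d.nB + d.nR ≤ sdiv Φ C := by
  intro Φ C d
  induction d with
  | ax A => intro hv; simp [BangD.nB, BangD.nR, sdiv]
  | divL Γ Δ₁ Δ₂ A B C₀ d₁ d₂ ih₁ ih₂ =>
    intro hv
    have h₁ := ih₁ (good_divL₁ hv)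
    have h₂ := ih₂ (good_divL₂ hv)
    simp [BangD.nB, BangD.nR, sdiv, Fm.ndiv, List.map_append, List.sum_append]
      at h₁ h₂ ⊢
    omega
  | divR Γ A B d₁ ih₁ =>
    intro hv
    have h₁ := ih₁ (good_divR hv)
    simp [BangD.nB, BangD.nR, sdiv, Fm.ndiv, List.map_append, List.sum_append]
      at h₁ ⊢
    omega
  | ldivL Γ Δ₁ Δ₂ A B C₀ d₁ d₂ ih₁ ih₂ =>
    intro hv
    have h₁ := ih₁ (good_ldivL₁ hv)
    have h₂ := ih₂ (good_ldivL₂ hv)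
    simp [BangD.nB, BangD.nR, sdiv, Fm.ndiv, List.map_append, List.sum_append]
      at h₁ h₂ ⊢
    omega
  | ldivR Γ A B d₁ ih₁ =>
    intro hv
    have h₁ := ih₁ (good_ldivR hv)
    simp [BangD.nB, BangD.nR, sdiv, Fm.ndiv, List.map_append, List.sum_append]
      at h₁ ⊢
    omega
  | bangL Γ₁ Γ₂ A C₀ d₁ ih₁ =>
    intro hv
    have h₁ := ih₁ (good_bangL hv)
    simp [BangD.nB, BangD.nR, sdiv, Fm.ndiv, List.map_append, List.sum_append]
      at h₁ ⊢
    omega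
  | bangR Γ B d₁ ih₁ =>
    intro hv
    have h₁ := ih₁ (good_bangR hv)
    simp [BangD.nB, BangD.nR, sdiv, Fm.ndiv, List.map_append, List.sum_append]
      at h₁ ⊢
    omega
  | perm1 Δ₁ Γ Δ₂ A C₀ d₁ ih₁ =>
    intro hv
    have h₁ := ih₁ (good_perm1 hv)
    simp [BangD.nB, BangD.nR, sdiv, Fm.ndiv, List.map_append, List.sum_append]
      at h₁ ⊢
    omega
  | perm2 Δ₁ Γ Δ₂ A C₀ d₁ ih₁ =>
    intro hv
    have h₁ := ih₁ (good_perm2 hv)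
    simp [BangD.nB, BangD.nR, sdiv, Fm.ndiv, List.map_append, List.sum_append]
      at h₁ ⊢
    omega
  | contr Δ₁ Δ₂ A C₀ d₁ ih₁ =>
    intro hv
    obtain ⟨n, rfl⟩ := good_contr_var hv
    have h₁ := ih₁ (good_contr hv)
    simp [BangD.nB, BangD.nR, sdiv, Fm.ndiv, List.map_append, List.sum_append]
      at h₁ ⊢
    omega

lemma count2 : ∀ {Φ : List Fm} {C : Fm} (d : BangD Φ C),
    d.contrCount + Φ.length + d.nR = d.nB + 1 := by
  intro Φ C d
  induction d <;>
    simp_all [BangD.nB, BangD.nR, BangD.contrCount, List.length_append] <;> omega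

lemma count3 : ∀ {Φ : List Fm} {C : Fm} (d : BangD Φ C), good Φ C →
    d.logicalCount ≤ d.nB + d.nR + sbang Φ C + d.contrCount := by
  intro Φ C d
  induction d with
  | ax A => intro hv; simp [BangD.logicalCount]
  | divL Γ Δ₁ Δ₂ A B C₀ d₁ d₂ ih₁ ih₂ =>
    intro hv
    have h₁ := ih₁ (good_divL₁ hv)
    have h₂ := ih₂ (good_divL₂ hv)
    simp [BangD.nB, BangD.nR, BangD.contrCount, BangD.logicalCount, sbang,
      Fm.nbang, List.map_append, List.sum_append] at h₁ h₂ ⊢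
    omega
  | divR Γ A B d₁ ih₁ =>
    intro hv
    have h₁ := ih₁ (good_divR hv)
    simp [BangD.nB, BangD.nR, BangD.contrCount, BangD.logicalCount, sbang,
      Fm.nbang, List.map_append, List.sum_append] at h₁ ⊢
    omega
  | ldivL Γ Δ₁ Δ₂ A B C₀ d₁ d₂ ih₁ ih₂ =>
    intro hv
    have h₁ := ih₁ (good_ldivL₁ hv)
    have h₂ := ih₂ (good_ldivL₂ hv)
    simp [BangD.nB, BangD.nR, BangD.contrCount, BangD.logicalCount, sbang,
      Fm.nbang, List.map_append, List.sum_append] at h₁ h₂ ⊢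
    omega
  | ldivR Γ A B d₁ ih₁ =>
    intro hv
    have h₁ := ih₁ (good_ldivR hv)
    simp [BangD.nB, BangD.nR, BangD.contrCount, BangD.logicalCount, sbang,
      Fm.nbang, List.map_append, List.sum_append] at h₁ ⊢
    omega
  | bangL Γ₁ Γ₂ A C₀ d₁ ih₁ =>
    intro hv
    have h₁ := ih₁ (good_bangL hv)
    simp [BangD.nB, BangD.nR, BangD.contrCount, BangD.logicalCount, sbang,
      Fm.nbang, List.map_append, List.sum_append] at h₁ ⊢
    omega
  | bangR Γ B d₁ ih₁ =>
    intro hv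
    have h₁ := ih₁ (good_bangR hv)
    simp [BangD.nB, BangD.nR, BangD.contrCount, BangD.logicalCount, sbang,
      Fm.nbang, List.map_append, List.sum_append] at h₁ ⊢
    omega
  | perm1 Δ₁ Γ Δ₂ A C₀ d₁ ih₁ =>
    intro hv
    have h₁ := ih₁ (good_perm1 hv)
    simp [BangD.nB, BangD.nR, BangD.contrCount, BangD.logicalCount, sbang,
      Fm.nbang, List.map_append, List.sum_append] at h₁ ⊢
    omega
  | perm2 Δ₁ Γ Δ₂ A C₀ d₁ ih₁ =>
    intro hv
    have h₁ := ih₁ (good_perm2 hv)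
    simp [BangD.nB, BangD.nR, BangD.contrCount, BangD.logicalCount, sbang,
      Fm.nbang, List.map_append, List.sum_append] at h₁ ⊢
    omega
  | contr Δ₁ Δ₂ A C₀ d₁ ih₁ =>
    intro hv
    obtain ⟨n, rfl⟩ := good_contr_var hv
    have h₁ := ih₁ (good_contr hv)
    simp [BangD.nB, BangD.nR, BangD.contrCount, BangD.logicalCount, sbang,
      Fm.nbang, List.map_append, List.sum_append] at h₁ ⊢
    omega

lemma Fm.size_eq (F : Fm) : F.size = 2 * F.ndiv + F.nbang + 1 := by
  induction F <;> simp_all [Fm.size, Fm.ndiv, Fm.nbang] <;> omega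

lemma seq_eq (Φ : List Fm) (C : Fm) :
    seqSize Φ C = 2 * sdiv Φ C + sbang Φ C + Φ.length + 1 := by
  unfold seqSize sdiv sbang
  induction Φ with
  | nil => simp [Fm.size_eq]
  | cons A Ψ ih => simp_all [Fm.size_eq]; omega

end Counts

section Perm

open Fm

/-- Move all bangs of `Φ` to the back, keeping the rest in order. -/
lemma cluster {C : Fm} : ∀ (Φ Ξ : List Fm) (d : BangD (Ξ ++ Φ) C),
    ∃ e : BangD (Ξ ++ Φ.filter keep ++ Φ.filter isBang) C,
      e.dsize ≤ d.dsize + Φ.length := by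
  intro Φ
  induction Φ with
  | nil => intro Ξ d; exact ⟨castD (by simp) d, (castD_dsize _ _).le⟩
  | cons A Ψ ih =>
    intro Ξ d
    cases A with
    | bang a =>
      obtain ⟨e₁, he₁⟩ := ih (Ξ ++ [bang a]) (castD (by simp) d)
      refine ⟨castD (by simp [List.filter_cons]) (BangD.perm1 Ξ (Ψ.filter keep) (Ψ.filter isBang) a C
        (castD (by simp) e₁)), ?_⟩
      simp [BangD.dsize] at *
      omega
    | var n =>
      obtain ⟨e₁, he₁⟩ := ih (Ξ ++ [var n]) (castD (by simp) d)
      refine ⟨castD (by simp [List.filter_cons]) e₁, ?_⟩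
      simp at *; omega
    | div a b =>
      obtain ⟨e₁, he₁⟩ := ih (Ξ ++ [div a b]) (castD (by simp) d)
      refine ⟨castD (by simp [List.filter_cons]) e₁, ?_⟩
      simp at *; omega
    | ldiv a b =>
      obtain ⟨e₁, he₁⟩ := ih (Ξ ++ [ldiv a b]) (castD (by simp) d)
      refine ⟨castD (by simp [List.filter_cons]) e₁, ?_⟩
      simp at *; omega

/-- Rebuild an arbitrary target list `Φ'` from its non-bang part followed by
(a permutation of) its bangs. -/
lemma place {C : Fm} : ∀ (Φ' Bs Ξ : List Fm), Bs.Perm (Φ'.filter isBang) →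
    ∀ (d : BangD (Ξ ++ Φ'.filter keep ++ Bs) C),
    ∃ e : BangD (Ξ ++ Φ') C, e.dsize ≤ d.dsize + Bs.length := by
  intro Φ'
  induction Φ' with
  | nil =>
    intro Bs Ξ hB d
    have hBs : Bs = [] := hB.eq_nil
    subst hBs
    exact ⟨castD (by simp) d, (castD_dsize _ _).le⟩
  | cons A Ψ ih =>
    intro Bs Ξ hB d
    cases A with
    | bang a =>
      have hmem : bang a ∈ Bs := hB.mem_iff.mpr (by simp)
      obtain ⟨B₁, B₂, rfl⟩ := List.append_of_mem hmem
      have hB' : (B₁ ++ B₂).Perm (Ψ.filter isBang) := by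
        have h1 : (bang a :: (B₁ ++ B₂)).Perm (bang a :: Ψ.filter isBang) :=
          List.perm_middle.symm.trans (hB.trans (by simp [List.filter_cons]))
        exact h1.cons_inv
      obtain ⟨e, he⟩ := ih (B₁ ++ B₂) (Ξ ++ [bang a]) hB'
        (castD (by simp)
          (BangD.perm2 Ξ (Ψ.filter keep ++ B₁) B₂ a C (castD (by simp) d)))
      refine ⟨castD (by simp) e, ?_⟩
      simp [BangD.dsize] at *
      omega
    | var n =>
      obtain ⟨e, he⟩ := ih Bs (Ξ ++ [var n]) (by simpa using hB) (castD (by simp [List.filter_cons]) d)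
      refine ⟨castD (by simp) e, ?_⟩
      simp at *; omega
    | div a b =>
      obtain ⟨e, he⟩ := ih Bs (Ξ ++ [div a b]) (by simpa using hB) (castD (by simp [List.filter_cons]) d)
      refine ⟨castD (by simp) e, ?_⟩
      simp at *; omega
    | ldiv a b =>
      obtain ⟨e, he⟩ := ih Bs (Ξ ++ [ldiv a b]) (by simpa using hB) (castD (by simp [List.filter_cons]) d)
      refine ⟨castD (by simp) e, ?_⟩
      simp at *; omega

/-- Any `canPerm`-rearrangement can be realized with at most `2·length` extra
permutation rules. -/
lemma permReach {Φ : List Fm} {C : Fm} (d : BangD Φ C) {Φ' : List Fm}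
    (hp : canPerm Φ' Φ) :
    ∃ e : BangD Φ' C, e.dsize ≤ d.dsize + 2 * Φ'.length := by
  obtain ⟨e₁, he₁⟩ := cluster Φ [] (castD (by simp) d)
  have hBs : (Φ.filter isBang).Perm (Φ'.filter isBang) :=
    (hp.1.filter isBang).symm
  obtain ⟨e₂, he₂⟩ := place Φ' (Φ.filter isBang) [] hBs
    (castD (by rw [hp.2]) e₁)
  refine ⟨castD (by simp) e₂, ?_⟩
  have h1 : (Φ.filter isBang).length ≤ Φ.length := Φ.length_filter_le isBang
  have h2 : Φ'.length = Φ.length := hp.1.length_eq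
  simp at *
  omega

end Perm

section Main

open Fm

/-- Main normalization lemma: permutation chains can be compressed. -/
lemma mainBound {Φ : List Fm} {C : Fm} (d : BangD Φ C) :
    ∀ M : ℕ, Φ.length + d.nR + d.contrCount ≤ M →
    ∀ Φ' : List Fm, canPerm Φ' Φ →
    ∃ e : BangD Φ' C,
      e.dsize ≤ (3 + 2 * M) * (d.logicalCount + d.contrCount + d.nB + 1) := by
  induction d with
  | ax A =>
    intro M hM Φ' hp
    have h : Φ' = [A] := List.perm_singleton.mp hp.1
    subst h
    refine ⟨BangD.ax A, ?_⟩
    simp [BangD.dsize, BangD.logicalCount, BangD.contrCount, BangD.nB]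
    omega
  | divL Γ Δ₁ Δ₂ A B C₀ d₁ d₂ ih₁ ih₂ =>
    intro M hM Φ' hp
    simp [BangD.nR, BangD.contrCount] at hM
    obtain ⟨e₁, he₁⟩ := ih₁ M (by omega) Γ (canPerm_refl _)
    obtain ⟨e₂, he₂⟩ := ih₂ M (by simp; omega) _ (canPerm_refl _)
    obtain ⟨e, he⟩ := permReach (BangD.divL Γ Δ₁ Δ₂ A B C₀ e₁ e₂) hp
    refine ⟨e, ?_⟩
    have hlen : Φ'.length ≤ M := by
      have := hp.1.length_eq; simp_all; omega
    simp only [BangD.dsize, BangD.logicalCount, BangD.contrCount, BangD.nB] at *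
    have hexp : (3 + 2 * M) * ((d₁.logicalCount + d₂.logicalCount + 1) +
        (d₁.contrCount + d₂.contrCount) + (d₁.nB + d₂.nB + 1) + 1)
        = (3 + 2 * M) * (d₁.logicalCount + d₁.contrCount + d₁.nB + 1)
          + (3 + 2 * M) * (d₂.logicalCount + d₂.contrCount + d₂.nB + 1)
          + (3 + 2 * M) := by ring
    have h3 : 2 * Φ'.length + 1 ≤ 3 + 2 * M := by omega
    linarith
  | divR Γ A B d₁ ih₁ =>
    intro M hM Φ' hp
    simp [BangD.nR, BangD.contrCount] at hM
    obtain ⟨e₁, he₁⟩ := ih₁ M (by simp; omega) _ (canPerm_refl _)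
    obtain ⟨e, he⟩ := permReach (BangD.divR Γ A B e₁) hp
    refine ⟨e, ?_⟩
    have hlen : Φ'.length ≤ M := by
      have := hp.1.length_eq; simp_all; omega
    simp only [BangD.dsize, BangD.logicalCount, BangD.contrCount, BangD.nB] at *
    have hexp : (3 + 2 * M) * ((d₁.logicalCount + 1) + d₁.contrCount + d₁.nB + 1)
        = (3 + 2 * M) * (d₁.logicalCount + d₁.contrCount + d₁.nB + 1)
          + (3 + 2 * M) := by ring
    have h3 : 2 * Φ'.length + 1 ≤ 3 + 2 * M := by omega
    linarith
  | ldivL Γ Δ₁ Δ₂ A B C₀ d₁ d₂ ih₁ ih₂ =>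
    intro M hM Φ' hp
    simp [BangD.nR, BangD.contrCount] at hM
    obtain ⟨e₁, he₁⟩ := ih₁ M (by omega) Γ (canPerm_refl _)
    obtain ⟨e₂, he₂⟩ := ih₂ M (by simp; omega) _ (canPerm_refl _)
    obtain ⟨e, he⟩ := permReach (BangD.ldivL Γ Δ₁ Δ₂ A B C₀ e₁ e₂) hp
    refine ⟨e, ?_⟩
    have hlen : Φ'.length ≤ M := by
      have := hp.1.length_eq; simp_all; omega
    simp only [BangD.dsize, BangD.logicalCount, BangD.contrCount, BangD.nB] at *
    have hexp : (3 + 2 * M) * ((d₁.logicalCount + d₂.logicalCount + 1) +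
        (d₁.contrCount + d₂.contrCount) + (d₁.nB + d₂.nB + 1) + 1)
        = (3 + 2 * M) * (d₁.logicalCount + d₁.contrCount + d₁.nB + 1)
          + (3 + 2 * M) * (d₂.logicalCount + d₂.contrCount + d₂.nB + 1)
          + (3 + 2 * M) := by ring
    have h3 : 2 * Φ'.length + 1 ≤ 3 + 2 * M := by omega
    linarith
  | ldivR Γ A B d₁ ih₁ =>
    intro M hM Φ' hp
    simp [BangD.nR, BangD.contrCount] at hM
    obtain ⟨e₁, he₁⟩ := ih₁ M (by simp; omega) _ (canPerm_refl _)
    obtain ⟨e, he⟩ := permReach (BangD.ldivR Γ A B e₁) hp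
    refine ⟨e, ?_⟩
    have hlen : Φ'.length ≤ M := by
      have := hp.1.length_eq; simp_all; omega
    simp only [BangD.dsize, BangD.logicalCount, BangD.contrCount, BangD.nB] at *
    have hexp : (3 + 2 * M) * ((d₁.logicalCount + 1) + d₁.contrCount + d₁.nB + 1)
        = (3 + 2 * M) * (d₁.logicalCount + d₁.contrCount + d₁.nB + 1)
          + (3 + 2 * M) := by ring
    have h3 : 2 * Φ'.length + 1 ≤ 3 + 2 * M := by omega
    linarith
  | bangL Γ₁ Γ₂ A C₀ d₁ ih₁ =>
    intro M hM Φ' hp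
    simp [BangD.nR, BangD.contrCount] at hM
    obtain ⟨e₁, he₁⟩ := ih₁ M (by simp; omega) _ (canPerm_refl _)
    obtain ⟨e, he⟩ := permReach (BangD.bangL Γ₁ Γ₂ A C₀ e₁) hp
    refine ⟨e, ?_⟩
    have hlen : Φ'.length ≤ M := by
      have := hp.1.length_eq; simp_all; omega
    simp only [BangD.dsize, BangD.logicalCount, BangD.contrCount, BangD.nB] at *
    have hexp : (3 + 2 * M) * ((d₁.logicalCount + 1) + d₁.contrCount + d₁.nB + 1)
        = (3 + 2 * M) * (d₁.logicalCount + d₁.contrCount + d₁.nB + 1)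
          + (3 + 2 * M) := by ring
    have h3 : 2 * Φ'.length + 1 ≤ 3 + 2 * M := by omega
    linarith
  | bangR Γ B d₁ ih₁ =>
    intro M hM Φ' hp
    simp [BangD.nR, BangD.contrCount] at hM
    obtain ⟨e₁, he₁⟩ := ih₁ M (by simp; omega) _ (canPerm_refl _)
    obtain ⟨e, he⟩ := permReach (BangD.bangR Γ B e₁) hp
    refine ⟨e, ?_⟩
    have hlen : Φ'.length ≤ M := by
      have := hp.1.length_eq; simp_all; omega
    simp only [BangD.dsize, BangD.logicalCount, BangD.contrCount, BangD.nB] at *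
    have hexp : (3 + 2 * M) * ((d₁.logicalCount + 1) + d₁.contrCount + d₁.nB + 1)
        = (3 + 2 * M) * (d₁.logicalCount + d₁.contrCount + d₁.nB + 1)
          + (3 + 2 * M) := by ring
    have h3 : 2 * Φ'.length + 1 ≤ 3 + 2 * M := by omega
    linarith
  | perm1 Δ₁ Γ Δ₂ A C₀ d₁ ih₁ =>
    intro M hM Φ' hp
    have hp' : canPerm Φ' (Δ₁ ++ bang A :: (Γ ++ Δ₂)) :=
      canPerm_trans hp (canPerm_move Δ₁ Γ Δ₂ A)
    have hM' : (Δ₁ ++ bang A :: (Γ ++ Δ₂)).length + d₁.nR + d₁.contrCount ≤ M := by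
      simp [BangD.nR, BangD.contrCount] at hM ⊢; omega
    obtain ⟨e, he⟩ := ih₁ M hM' Φ' hp'
    exact ⟨e, by simpa [BangD.logicalCount, BangD.contrCount, BangD.nB] using he⟩
  | perm2 Δ₁ Γ Δ₂ A C₀ d₁ ih₁ =>
    intro M hM Φ' hp
    have hp' : canPerm Φ' (Δ₁ ++ Γ ++ bang A :: Δ₂) :=
      canPerm_trans hp (canPerm_symm (canPerm_move Δ₁ Γ Δ₂ A))
    have hM' : (Δ₁ ++ Γ ++ bang A :: Δ₂).length + d₁.nR + d₁.contrCount ≤ M := by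
      simp [BangD.nR, BangD.contrCount] at hM ⊢; omega
    obtain ⟨e, he⟩ := ih₁ M hM' Φ' hp'
    exact ⟨e, by simpa [BangD.logicalCount, BangD.contrCount, BangD.nB] using he⟩
  | contr Δ₁ Δ₂ A C₀ d₁ ih₁ =>
    intro M hM Φ' hp
    simp [BangD.nR, BangD.contrCount] at hM
    obtain ⟨e₁, he₁⟩ := ih₁ M (by simp; omega) _ (canPerm_refl _)
    obtain ⟨e, he⟩ := permReach (BangD.contr Δ₁ Δ₂ A C₀ e₁) hp
    refine ⟨e, ?_⟩
    have hlen : Φ'.length ≤ M := by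
      have := hp.1.length_eq; simp_all; omega
    simp only [BangD.dsize, BangD.logicalCount, BangD.contrCount, BangD.nB] at *
    have hexp : (3 + 2 * M) * (d₁.logicalCount + (d₁.contrCount + 1) + d₁.nB + 1)
        = (3 + 2 * M) * (d₁.logicalCount + d₁.contrCount + d₁.nB + 1)
          + (3 + 2 * M) := by ring
    have h3 : 2 * Φ'.length + 1 ≤ 3 + 2 * M := by omega
    linarith

lemma noEmptyAux : ∀ {Φ : List Fm} {C : Fm}, BangD Φ C → Φ = [] →
    (∃ p, C = var p) → False := by
  intro Φ C d
  induction d <;> intro hΦ hC <;> simp_all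

lemma noEmptyVar (p : ℕ) (d : BangD [] (var p)) : False :=
  noEmptyAux d rfl ⟨p, rfl⟩

end Main

lemma Fm.size_pos (F : Fm) : 1 ≤ F.size := by
  have := Fm.size_eq F; omega

/-- Every !L*-derivable sequent of size n in which ! is applied only to
variables has a cut-free derivation of size less than 12n² + 3n. -/
theorem stmt14 (Φ : List Fm) (C : Fm) (h : Nonempty (BangD Φ C))
    (hv : ∀ F ∈ C :: Φ, bangVar F) :
    ∃ d : BangD Φ C, d.dsize < 12 * (seqSize Φ C) ^ 2 + 3 * seqSize Φ C := by
  obtain ⟨d⟩ := h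
  have hg : good Φ C := hv
  have h1 := count1 d hg
  have h2 := count2 d
  have h3 := count3 d hg
  have hsz := seq_eq Φ C
  have hC := Fm.size_pos C
  by_cases h2n : 2 ≤ seqSize Φ C
  · obtain ⟨e, he⟩ := mainBound d (Φ.length + d.nR + d.contrCount) le_rfl Φ
      (canPerm_refl Φ)
    refine ⟨e, ?_⟩
    have hM : 3 + 2 * (Φ.length + d.nR + d.contrCount) ≤ seqSize Φ C + 4 := by
      omega
    have hN : d.logicalCount + d.contrCount + d.nB + 1 ≤ 2 * seqSize Φ C + 1 := by
      omega
    have hfin : e.dsize ≤ (seqSize Φ C + 4) * (2 * seqSize Φ C + 1) :=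
      he.trans (Nat.mul_le_mul hM hN)
    have hsq : seqSize Φ C ^ 2 = seqSize Φ C * seqSize Φ C := sq (seqSize Φ C)
    nlinarith
  · exfalso
    have hn1 : seqSize Φ C = 1 := by
      have : 1 ≤ seqSize Φ C := by
        unfold seqSize; omega
      omega
    have hΦ : Φ = [] := by
      cases Φ with
      | nil => rfl
      | cons F Ψ =>
        exfalso
        have hF := Fm.size_pos F
        unfold seqSize at hn1
        simp at hn1
        omega
    subst hΦ
    have hCs : C.size = 1 := by
      unfold seqSize at hn1; simp at hn1; omega
    obtain ⟨p, rfl⟩ : ∃ p, C = Fm.var p := by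
      cases C with
      | var p => exact ⟨p, rfl⟩
      | div a b => exfalso; have := Fm.size_pos a; have := Fm.size_pos b;
                   simp [Fm.size] at hCs; omega
      | ldiv a b => exfalso; have := Fm.size_pos a; have := Fm.size_pos b;
                    simp [Fm.size] at hCs; omega
      | bang a => exfalso; have := Fm.size_pos a; simp [Fm.size] at hCs; omega
    exact noEmptyVar p d
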